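/- Let n ≥ 1. The convex hull in ℝ^n of the set of shell distributions {n_S(g) : g a simple graph on n vertices} equals the n-dilated standard simplex n·Δ_{n-1} = {x ∈ ℝ^n : x_j ≥ 0 for all j, and Σ_{j=0}^{n-1} x_j = n}, i.e., the convex hull of the points n·e_0, n·e_1, …, n·e_{n-1}, where e_j are the standard unit vectors of ℝ^n. -/

import Mathlib

/-- `MinDegGE G k S`: the subgraph of `G` induced on the vertex set `S` has minimum
degree at least `k`, i.e. every vertex of `S` has at least `k` neighbors inside `S`. -/
def MinDegGE {V : Type*} (G : SimpleGraph V) (k : ℕ) (S : Set V) : Prop :=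
  ∀ v ∈ S, k ≤ Nat.card {w : V // G.Adj v w ∧ w ∈ S}

/-- The vertex set of the `k`-core of `G`: the union of all vertex subsets inducing a
subgraph of minimum degree at least `k`. -/
def coreVerts {V : Type*} (G : SimpleGraph V) (k : ℕ) : Set V :=
  {v | ∃ S : Set V, MinDegGE G k S ∧ v ∈ S}

/-- The shell index of `v`: the largest `k` such that `v` belongs to the `k`-core. -/
noncomputable def shellIndex {V : Type*} (G : SimpleGraph V) (v : V) : ℕ :=
  sSup {k : ℕ | v ∈ coreVerts G k}

/-- `n_j(g)`: the number of vertices of `G` with shell index `j`. -/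
noncomputable def shellCount {V : Type*} (G : SimpleGraph V) (j : ℕ) : ℕ :=
  Nat.card {v : V // shellIndex G v = j}


section Aux

variable {n : ℕ}

/-- Adjacency for the graph `G_j` on `Fin n`: clique on `A = {0,…,j}` plus every vertex
outside `A` joined to `{1,…,j}`. -/
private def gAdj (n j : ℕ) (v w : Fin n) : Prop :=
  v ≠ w ∧ ((v.val ≤ j ∧ w.val ≤ j) ∨ (v.val ≤ j ∧ 0 < v.val ∧ j < w.val) ∨
    (w.val ≤ j ∧ 0 < w.val ∧ j < v.val))

private def gGraph (n j : ℕ) : SimpleGraph (Fin n) where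
  Adj := gAdj n j
  symm := by
    refine ⟨?_⟩
    rintro v w ⟨hne, h⟩
    exact ⟨hne.symm, by tauto⟩
  loopless := ⟨fun v h => h.1 rfl⟩

private lemma minDegGE_zero (G : SimpleGraph (Fin n)) : MinDegGE G 0 Set.univ :=
  fun _ _ => Nat.zero_le _

private lemma zero_mem_shellSet (G : SimpleGraph (Fin n)) (v : Fin n) :
    0 ∈ {k : ℕ | v ∈ coreVerts G k} :=
  ⟨Set.univ, minDegGE_zero G, Set.mem_univ v⟩

private lemma card_nbrs_le (G : SimpleGraph (Fin n)) (v : Fin n) (S : Set (Fin n)) :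
    Nat.card {w : Fin n // G.Adj v w ∧ w ∈ S} ≤ n - 1 := by
  have h1 : Nat.card {w : Fin n // G.Adj v w ∧ w ∈ S} ≤ Nat.card {w : Fin n // ¬ w = v} := by
    apply Nat.card_le_card_of_injective
      (fun x => (⟨x.1, fun h => G.irrefl (h ▸ x.2.1)⟩ : {w : Fin n // ¬ w = v}))
    intro a b hab
    exact Subtype.ext (by simpa using Subtype.ext_iff.1 hab)
  have h2 : Nat.card {w : Fin n // ¬ w = v} = n - 1 := by
    classical
    rw [Nat.card_eq_fintype_card, Fintype.card_subtype_compl, Fintype.card_subtype_eq,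
      Fintype.card_fin]
  omega

private lemma natCard_eq_ncard (G : SimpleGraph (Fin n)) (v : Fin n) (S : Set (Fin n)) :
    Nat.card {w : Fin n // G.Adj v w ∧ w ∈ S} = {w : Fin n | G.Adj v w ∧ w ∈ S}.ncard :=
  Nat.card_coe_set_eq _

private lemma mem_shellSet_le (G : SimpleGraph (Fin n)) (v : Fin n) {k : ℕ}
    (hk : k ∈ {k : ℕ | v ∈ coreVerts G k}) : k ≤ n - 1 := by
  obtain ⟨S, hS, hv⟩ := hk
  exact le_trans (hS v hv) (card_nbrs_le G v S)

private lemma shellIndex_le (G : SimpleGraph (Fin n)) (v : Fin n) :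
    shellIndex G v ≤ n - 1 :=
  csSup_le ⟨0, zero_mem_shellSet G v⟩ (fun _ hk => mem_shellSet_le G v hk)

private lemma sum_shellCount (hn : 1 ≤ n) (G : SimpleGraph (Fin n)) :
    ∑ j : Fin n, shellCount G (j : ℕ) = n := by
  classical
  have hf : ∀ v, shellIndex G v < n := fun v =>
    lt_of_le_of_lt (shellIndex_le G v) (by omega)
  have hsc : ∀ j : Fin n, shellCount G (j : ℕ) =
      (Finset.univ.filter fun v : Fin n => (⟨shellIndex G v, hf v⟩ : Fin n) = j).card := by
    intro j
    rw [shellCount, Nat.card_eq_fintype_card, Fintype.card_subtype]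
    congr 1
    ext v
    simp [Fin.ext_iff]
  calc ∑ j : Fin n, shellCount G (j : ℕ)
      = ∑ j : Fin n, (Finset.univ.filter
          fun v : Fin n => (⟨shellIndex G v, hf v⟩ : Fin n) = j).card := by
        exact Finset.sum_congr rfl fun j _ => hsc j
    _ = (Finset.univ : Finset (Fin n)).card :=
        (Finset.card_eq_sum_card_fiberwise (fun x _ => Finset.mem_univ _)).symm
    _ = n := by simp

section GraphJ

variable (j : Fin n)

private lemma gGraph_deg_ge (v : Fin n) (S : Set (Fin n)) (hS : Set.univ ⊆ S) :
    (j : ℕ) ≤ Nat.card {w : Fin n // (gGraph n (j : ℕ)).Adj v w ∧ w ∈ S} := by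
  classical
  haveI : NeZero n := ⟨by have := j.isLt; omega⟩
  rw [natCard_eq_ncard]
  by_cases hv : v.val ≤ (j : ℕ)
  · have hsub : (((Finset.Iic j).erase v : Finset (Fin n)) : Set (Fin n)) ⊆
        {w : Fin n | (gGraph n (j : ℕ)).Adj v w ∧ w ∈ S} := by
      intro w hw
      simp only [Finset.coe_erase, Set.mem_diff, Finset.mem_coe, Finset.mem_Iic,
        Set.mem_singleton_iff] at hw
      refine ⟨⟨fun h => hw.2 h.symm, Or.inl ⟨hv, hw.1⟩⟩, hS (Set.mem_univ w)⟩
    have hle := Set.ncard_le_ncard hsub (Set.toFinite _)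
    rw [Set.ncard_coe_finset] at hle
    have h2 : ((Finset.Iic j).erase v).card = (Finset.Iic j).card - 1 :=
      Finset.card_erase_of_mem (Finset.mem_Iic.2 (Fin.le_def.2 hv))
    rw [h2, Fin.card_Iic] at hle
    omega
  · push_neg at hv
    have hsub : (((Finset.Iic j).erase 0 : Finset (Fin n)) : Set (Fin n)) ⊆
        {w : Fin n | (gGraph n (j : ℕ)).Adj v w ∧ w ∈ S} := by
      intro w hw
      simp only [Finset.coe_erase, Set.mem_diff, Finset.mem_coe, Finset.mem_Iic,
        Set.mem_singleton_iff] at hw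
      have hw0 : 0 < w.val :=
        Nat.pos_of_ne_zero (fun h => hw.2 (Fin.ext (by simp [h])))
      refine ⟨⟨?_, Or.inr (Or.inr ⟨hw.1, hw0, hv⟩)⟩, hS (Set.mem_univ w)⟩
      intro h
      have : w.val ≤ (j : ℕ) := hw.1
      omega
    have := Set.ncard_le_ncard hsub (Set.toFinite _)
    rw [Set.ncard_coe_finset,
      Finset.card_erase_of_mem (Finset.mem_Iic.2 (Fin.zero_le j)), Fin.card_Iic] at this
    omega

private lemma gGraph_deg_le {v : Fin n} (hv : (j : ℕ) < v.val) (S : Set (Fin n)) :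
    Nat.card {w : Fin n // (gGraph n (j : ℕ)).Adj v w ∧ w ∈ S} ≤ (j : ℕ) := by
  classical
  haveI : NeZero n := ⟨by have := j.isLt; omega⟩
  rw [natCard_eq_ncard]
  have hsub : {w : Fin n | (gGraph n (j : ℕ)).Adj v w ∧ w ∈ S} ⊆
      (((Finset.Iic j).erase 0 : Finset (Fin n)) : Set (Fin n)) := by
    rintro w ⟨⟨hne, hadj⟩, -⟩
    have : w.val ≤ (j : ℕ) ∧ 0 < w.val := by
      rcases hadj with ⟨h1, _⟩ | ⟨h1, _, _⟩ | ⟨h1, h2, _⟩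
      · omega
      · omega
      · exact ⟨h1, h2⟩
    simp only [Finset.coe_erase, Set.mem_diff, Finset.mem_coe, Finset.mem_Iic,
      Set.mem_singleton_iff]
    refine ⟨Fin.le_def.2 this.1, fun h => by simp [h] at this⟩
  have := Set.ncard_le_ncard hsub (Set.toFinite _)
  rw [Set.ncard_coe_finset,
    Finset.card_erase_of_mem (Finset.mem_Iic.2 (Fin.zero_le j)), Fin.card_Iic] at this
  omega

private lemma gGraph_core_empty : coreVerts (gGraph n (j : ℕ)) ((j : ℕ) + 1) = ∅ := by
  classical
  ext v
  simp only [Set.mem_empty_iff_false, iff_false]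
  rintro ⟨S, hS, hv⟩
  -- every vertex of S lies in Iic j
  have hSA : S ⊆ ((Finset.Iic j : Finset (Fin n)) : Set (Fin n)) := by
    intro u hu
    by_contra h
    have hu' : (j : ℕ) < u.val := by
      simp only [Finset.mem_coe, Finset.mem_Iic] at h
      exact lt_of_not_ge (fun hle => h (Fin.le_def.2 hle))
    have := hS u hu
    have := gGraph_deg_le j hu' S
    omega
  have hvS : v ∉ {w : Fin n | (gGraph n (j : ℕ)).Adj v w ∧ w ∈ S} :=
    fun h => (gGraph n (j : ℕ)).irrefl h.1
  have hT : insert v {w : Fin n | (gGraph n (j : ℕ)).Adj v w ∧ w ∈ S} ⊆ S := by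
    intro u hu
    rcases Set.mem_insert_iff.1 hu with rfl | hu
    · exact hv
    · exact hu.2
  have h1 : (insert v {w : Fin n | (gGraph n (j : ℕ)).Adj v w ∧ w ∈ S}).ncard =
      {w : Fin n | (gGraph n (j : ℕ)).Adj v w ∧ w ∈ S}.ncard + 1 :=
    Set.ncard_insert_of_notMem hvS (Set.toFinite _)
  have h2 : {w : Fin n | (gGraph n (j : ℕ)).Adj v w ∧ w ∈ S}.ncard ≥ (j : ℕ) + 1 := by
    have := hS v hv
    rwa [natCard_eq_ncard] at this
  have h3 : (insert v {w : Fin n | (gGraph n (j : ℕ)).Adj v w ∧ w ∈ S}).ncard ≤ S.ncard :=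
    Set.ncard_le_ncard hT (Set.toFinite _)
  have h4 : S.ncard ≤ (j : ℕ) + 1 := by
    have := Set.ncard_le_ncard hSA (Set.toFinite _)
    rwa [Set.ncard_coe_finset, Fin.card_Iic] at this
  omega

private lemma shellIndex_gGraph (v : Fin n) :
    shellIndex (gGraph n (j : ℕ)) v = (j : ℕ) := by
  apply le_antisymm
  · apply csSup_le ⟨0, zero_mem_shellSet _ v⟩
    rintro k ⟨S, hS, hv⟩
    by_contra h
    push_neg at h
    have hS' : MinDegGE (gGraph n (j : ℕ)) ((j : ℕ) + 1) S :=
      fun u hu => le_trans (by omega) (hS u hu)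
    have : v ∈ coreVerts (gGraph n (j : ℕ)) ((j : ℕ) + 1) := ⟨S, hS', hv⟩
    rw [gGraph_core_empty] at this
    exact this
  · apply le_csSup ⟨n - 1, fun k hk => mem_shellSet_le _ v hk⟩
    exact ⟨Set.univ, fun u _ => gGraph_deg_ge j u Set.univ (subset_refl _), Set.mem_univ v⟩

private lemma shellCount_gGraph (i : Fin n) :
    shellCount (gGraph n (j : ℕ)) (i : ℕ) = if i = j then n else 0 := by
  classical
  rw [shellCount, Nat.card_eq_fintype_card]
  by_cases h : i = j
  · simp only [if_pos h]
    rw [Fintype.card_subtype]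
    rw [Finset.filter_true_of_mem (fun v _ => by rw [shellIndex_gGraph j v, h])]
    simp
  · simp only [if_neg h]
    rw [Fintype.card_eq_zero_iff]
    refine ⟨fun ⟨v, hv⟩ => h ?_⟩
    rw [shellIndex_gGraph j v] at hv
    exact Fin.ext hv.symm

private lemma gGraph_dist :
    (fun i : Fin n => (shellCount (gGraph n (j : ℕ)) (i : ℕ) : ℝ)) =
      (n : ℝ) • (Pi.single j (1 : ℝ) : Fin n → ℝ) := by
  funext i
  rw [shellCount_gGraph j i]
  by_cases h : i = j <;> simp [h, Pi.single_apply]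

end GraphJ

end Aux

open Pointwise

/-- For `n ≥ 1`, the convex hull in `ℝⁿ` of the set of shell
distributions of simple graphs on `n` vertices equals the `n`-dilated standard simplex
`{x : xⱼ ≥ 0, Σ xⱼ = n}`, which is the convex hull of the points `n·e₀, …, n·e_{n-1}`. -/
theorem convexHull_shell_distributions_eq_dilated_simplex {n : ℕ} (hn : 1 ≤ n) :
    convexHull ℝ {x : Fin n → ℝ |
        ∃ G : SimpleGraph (Fin n), x = fun j : Fin n => (shellCount G (j : ℕ) : ℝ)} =
      {x : Fin n → ℝ | (∀ j, 0 ≤ x j) ∧ ∑ j, x j = (n : ℝ)} ∧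
    convexHull ℝ (Set.range fun i : Fin n =>
        (n : ℝ) • (Pi.single i (1 : ℝ) : Fin n → ℝ)) =
      {x : Fin n → ℝ | (∀ j, 0 ≤ x j) ∧ ∑ j, x j = (n : ℝ)} := by
  classical
  have hn0 : (0 : ℝ) < (n : ℝ) := by exact_mod_cast hn
  -- Part 2: the scaled basis hull is the dilated simplex.
  have hsimplex : convexHull ℝ (Set.range fun i : Fin n =>
      (n : ℝ) • (Pi.single i (1 : ℝ) : Fin n → ℝ)) =
      {x : Fin n → ℝ | (∀ j, 0 ≤ x j) ∧ ∑ j, x j = (n : ℝ)} := by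
    have hb : convexHull ℝ (Set.range fun i : Fin n => (Pi.single i (1 : ℝ) : Fin n → ℝ)) =
        stdSimplex ℝ (Fin n) := by
      rw [← convexHull_basis_eq_stdSimplex]
      exact congrArg (convexHull ℝ) (congrArg Set.range (funext fun i => funext fun j => by
        by_cases h : i = j <;> simp [h, Pi.single_apply]))
    have hr : (Set.range fun i : Fin n => (n : ℝ) • (Pi.single i (1 : ℝ) : Fin n → ℝ)) =
        (n : ℝ) • Set.range (fun i : Fin n => (Pi.single i (1 : ℝ) : Fin n → ℝ)) :=
      Set.range_smul (n : ℝ) _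
    rw [hr, convexHull_smul, hb]
    ext x
    constructor
    · rintro ⟨y, ⟨hy0, hy1⟩, rfl⟩
      refine ⟨fun j => ?_, ?_⟩
      · simpa using mul_nonneg hn0.le (hy0 j)
      · simp only [Pi.smul_apply, smul_eq_mul, ← Finset.mul_sum, hy1, mul_one]
    · rintro ⟨hx0, hx1⟩
      refine ⟨(n : ℝ)⁻¹ • x, ⟨fun j => ?_, ?_⟩, ?_⟩
      · simpa using mul_nonneg (inv_nonneg.2 hn0.le) (hx0 j)
      · simp only [Pi.smul_apply, smul_eq_mul, ← Finset.mul_sum, hx1]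
        exact inv_mul_cancel₀ hn0.ne'
      · show (n : ℝ) • ((n : ℝ)⁻¹ • x) = x
        rw [smul_smul, mul_inv_cancel₀ hn0.ne', one_smul]
  refine ⟨?_, hsimplex⟩
  -- Part 1.
  apply le_antisymm
  · -- hull of distributions ⊆ simplex
    apply convexHull_min
    · rintro x ⟨G, rfl⟩
      refine ⟨fun j => by positivity, ?_⟩
      rw [← Nat.cast_sum]
      exact_mod_cast congrArg (Nat.cast : ℕ → ℝ) (sum_shellCount hn G)
    · rw [← hsimplex]
      exact convex_convexHull ℝ _
  · rw [← hsimplex]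
    apply convexHull_mono
    rintro x ⟨i, rfl⟩
    exact ⟨gGraph n (i : ℕ), (gGraph_dist i).symm⟩
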